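/- Let (X, τ) be a topological space and τ* = τ ∨ A an expansion of τ by a family A ⊆ P(X). A τ*-open set U is τ-open if and only if for every A ∈ A there is a τ-open set V_A with U ∩ A ⊆ V_A ⊆ U ∪ A. -/
import Mathlib


/-- for `τ* = τ ∨ 𝒜` and `U` τ*-open, `U` is τ-open iff for every `A ∈ 𝒜`
there is a τ-open `V` with `U ∩ A ⊆ V ⊆ U ∪ A`. -/
theorem stmt_1 {X : Type*} (t : TopologicalSpace X) (𝒜 : Set (Set X)) (U : Set X)
    (hU : (TopologicalSpace.generateFrom (𝒜 ∪ {V | t.IsOpen V})).IsOpen U) :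
    t.IsOpen U ↔ ∀ A ∈ 𝒜, ∃ V : Set X, t.IsOpen V ∧ U ∩ A ⊆ V ∧ V ⊆ U ∪ A := by
  classical
  constructor
  · intro hUo A hA
    exact ⟨U, hUo, Set.inter_subset_left, Set.subset_union_left⟩
  · intro h
    choose V hVopen hV1 hV2 using h
    have key : ∀ x ∈ U, ∃ W, W ⊆ U ∧ t.IsOpen W ∧ x ∈ W := ?_
    · letI := t
      show IsOpen U
      rw [isOpen_iff_forall_mem_open]
      exact key
    intro x hx
    obtain ⟨v, hv, hxv, hvU⟩ :=
      @TopologicalSpace.IsTopologicalBasis.exists_subset_of_mem_open X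
        (TopologicalSpace.generateFrom (𝒜 ∪ {V | t.IsOpen V})) _
        (@TopologicalSpace.isTopologicalBasis_of_subbasis X
          (TopologicalSpace.generateFrom (𝒜 ∪ {V | t.IsOpen V})) _ rfl) x U hx hU
    obtain ⟨f, ⟨hfin, hfsub⟩, rfl⟩ := hv
    set g : Set X → Set X := fun s =>
      if hs : s ∈ 𝒜 ∧ ¬ t.IsOpen s then V s hs.1 else s with hg
    refine ⟨⋂ s ∈ f, g s, ?_, ?_, ?_⟩
    · -- subset of U
      intro y hy
      by_cases hyf : y ∈ ⋂₀ f
      · exact hvU hyf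
      · obtain ⟨s, hsf, hys⟩ : ∃ s ∈ f, y ∉ s := by
          simpa [Set.mem_sInter, not_forall] using hyf
        have hygs : y ∈ g s := by simpa using (Set.mem_iInter₂.mp hy s hsf)
        by_cases hs : s ∈ 𝒜 ∧ ¬ t.IsOpen s
        · rw [hg] at hygs; simp only [hs, dif_pos] at hygs
          rcases hV2 s hs.1 hygs with h | h
          · exact h
          · exact absurd h hys
        · rw [hg] at hygs; simp only [hs, dif_neg, not_false_iff] at hygs
          exact absurd hygs hys
    · -- open
      refine hfin.isOpen_biInter fun s hsf => ?_
      by_cases hs : s ∈ 𝒜 ∧ ¬ t.IsOpen s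
      · rw [hg]; simp only [hs, dif_pos]; exact hVopen s hs.1
      · rw [hg]; simp only [hs, dif_neg, not_false_iff]
        rcases hfsub hsf with hA | hO
        · by_contra hno
          exact hs ⟨hA, hno⟩
        · exact hO
    · -- x mem
      refine Set.mem_biInter fun s hsf => ?_
      have hxs : x ∈ s := hxv s hsf
      by_cases hs : s ∈ 𝒜 ∧ ¬ t.IsOpen s
      · rw [hg]; simp only [hs, dif_pos]
        exact hV1 s hs.1 ⟨hx, hxs⟩
      · rw [hg]; simpa [hs] using hxs
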